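/- On a finite-dimensional complex vector space E, let X_1,…,X_n be pairwise commuting operators and λ ∈ ℂⁿ. Suppose E = E₁ ⊕ E₂ where E₁ is invariant under all X_ℓ, and λ is not in the joint spectrum of the induced commuting operators X_{ℓ,2} = p₂ X_ℓ i₂ on E₂ (p₂, i₂ being the projection and inclusion of E₂). Then every cocycle C ∈ E ⊗ Λ of the Koszul complex K*(X−λ, E) is cohomologous to a cocycle lying in E₁ ⊗ Λ. -/

import Mathlib

set_option synthInstance.maxHeartbeats 1000000
set_option maxHeartbeats 4000000

/-- Creation operator `e_{η_l}` on the exterior algebra on `n` generators. -/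
noncomputable def creationOp (F : Type*) [Field F] (n : ℕ) (l : Fin n) :
    ExteriorAlgebra F (Fin n → F) →ₗ[F] ExteriorAlgebra F (Fin n → F) :=
  LinearMap.mulLeft F (ExteriorAlgebra.ι F (Pi.single l 1))

/-- The (total) Koszul differential `𝒦 = Σ_j (X_j − λ_j id) ⊗ e_{η_j}` on `E ⊗ Λℂⁿ`. -/
noncomputable def koszulOp {E : Type*} [AddCommGroup E] [Module ℂ E] (n : ℕ)
    (X : Fin n → Module.End ℂ E) (lam : Fin n → ℂ) :
    TensorProduct ℂ E (ExteriorAlgebra ℂ (Fin n → ℂ)) →ₗ[ℂ]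
      TensorProduct ℂ E (ExteriorAlgebra ℂ (Fin n → ℂ)) :=
  ∑ j, TensorProduct.map (X j - lam j • 1) (creationOp ℂ n j)

open Module in
lemma bezout {V : Type*} [AddCommGroup V] [Module ℂ V] [FiniteDimensional ℂ V]
    {n : ℕ} (T : Fin n → Module.End ℂ V)
    (hT : ∀ k l, T k * T l = T l * T k)
    (hker : ∀ v : V, (∀ l, T l v = 0) → v = 0) :
    ∃ Z : Fin n → Module.End ℂ V,
      (∀ k l, Z k * T l = T l * Z k) ∧ ∑ l, Z l * T l = 1 := by
  classical
  have hcomm : ∀ a ∈ Set.range T, ∀ b ∈ Set.range T, a * b = b * a := by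
    rintro a ⟨k, rfl⟩ b ⟨l, rfl⟩; exact hT k l
  letI A := Algebra.adjoin ℂ (Set.range T)
  letI : CommRing A := Algebra.adjoinCommRingOfComm ℂ hcomm
  set t : Fin n → A := fun l => ⟨T l, Algebra.subset_adjoin (Set.mem_range_self l)⟩ with ht
  set I : Ideal A := Ideal.span (Set.range t) with hI
  have htop : I = ⊤ := by
    by_contra hne
    have h1I : (1 : A) ∉ I := fun h => hne (Ideal.eq_top_of_isUnit_mem I h isUnit_one)
    -- find K ≥ 1 with I^(K+1) = I^K
    have hnoeth : IsNoetherian A A := isNoetherian_of_tower ℂ inferInstance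
    have hstab : ∃ j : ℕ, I ^ (j + 2) = I ^ (j + 1) := by
      by_contra hall
      push_neg at hall
      set g : ℕ → ℕ := fun j => Module.finrank ℂ ((I ^ (j+1) : Ideal A).restrictScalars ℂ) with hg
      have hlt : ∀ j, g (j + 1) < g j := by
        intro j
        have hle : (I ^ (j + 2) : Ideal A) ≤ I ^ (j + 1) :=
          Ideal.pow_le_pow_right (by omega)
        have hle' : ((I ^ (j+2) : Ideal A).restrictScalars ℂ) ≤ ((I ^ (j+1) : Ideal A).restrictScalars ℂ) := hle
        have hne2 : ((I ^ (j+2) : Ideal A).restrictScalars ℂ) ≠ ((I ^ (j+1) : Ideal A).restrictScalars ℂ) := by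
          intro h
          exact hall j (Submodule.restrictScalars_injective ℂ _ _ h)
        exact Submodule.finrank_lt_finrank_of_lt (lt_of_le_of_ne hle' hne2)
      have hmono : ∀ j, g j + j ≤ g 0 := by
        intro j
        induction j with
        | zero => simp
        | succ m ih => have := hlt m; omega
      have := hmono (g 0 + 1); omega
    obtain ⟨j, hjeq⟩ := hstab
    set K := j + 1 with hK
    -- Nakayama
    have hfg : (I ^ K : Ideal A).FG := IsNoetherian.noetherian _
    have hle : (I ^ K : Ideal A) ≤ I • (I ^ K : Ideal A) := by
      rw [Ideal.smul_eq_mul, ← pow_succ']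
      exact le_of_eq hjeq.symm
    obtain ⟨r, hr1, hr0⟩ :=
      Submodule.exists_sub_one_mem_and_smul_eq_zero_of_fg_of_le_smul I (I ^ K) hfg hle
    set u : A := 1 - r with hu
    have huI : u ∈ I := by
      have : -(r - 1) ∈ I := I.neg_mem hr1
      simpa [hu] using this
    have hufix : ∀ x ∈ (I ^ K : Ideal A), u * x = x := by
      intro x hx
      have := hr0 x hx
      rw [smul_eq_mul] at this
      rw [hu, sub_mul, one_mul, this, sub_zero]
    have hpowfix : ∀ m : ℕ, ∀ x ∈ (I ^ K : Ideal A), u ^ m * x = x := by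
      intro m
      induction m with
      | zero => intro x _; rw [pow_zero, one_mul]
      | succ m ih =>
        intro x hx
        rw [pow_succ, mul_assoc, hufix x hx, ih x hx]
    set e : A := u ^ K with he
    have heIK : e ∈ (I ^ K : Ideal A) := Ideal.pow_mem_pow huI K
    have heI : e ∈ I := Ideal.pow_le_self (by omega) heIK
    set f : A := 1 - e with hf
    have hxf : ∀ x ∈ (I ^ K : Ideal A), x * f = 0 := by
      intro x hx
      rw [hf, mul_sub, mul_one, mul_comm x e, hpowfix K x hx, sub_self]
    have hfne : f ≠ 0 := by
      intro h
      rw [hf, sub_eq_zero] at h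
      exact h1I (h ▸ heI)
    -- pass to operators
    have hfopne : (f : Module.End ℂ V) ≠ 0 := by
      intro h
      apply hfne
      exact Subtype.coe_injective (by simpa using h)
    obtain ⟨v0, hv0⟩ : ∃ v, (f : Module.End ℂ V) v ≠ 0 := by
      by_contra hall
      push_neg at hall
      exact hfopne (LinearMap.ext fun v => by simpa using hall v)
    set S : ℕ → Submodule ℂ V := fun j =>
      Submodule.span ℂ {w | ∃ x ∈ (I ^ j : Ideal A), ∃ v : V, ((x * f : A) : Module.End ℂ V) v = w}
      with hS
    have hS0 : S 0 ≠ ⊥ := by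
      intro hbot
      apply hv0
      have hmem : (f : Module.End ℂ V) v0 ∈ S 0 := by
        apply Submodule.subset_span
        exact ⟨1, by simp, v0, by simp⟩
      rw [hbot, Submodule.mem_bot] at hmem
      exact hmem
    have hSK : S K = ⊥ := by
      rw [hS, Submodule.span_eq_bot]
      rintro w ⟨x, hx, v, rfl⟩
      simp [hxf x hx]
    have hstep : ∀ (l : Fin n) (j : ℕ), ∀ w ∈ S j, T l w ∈ S (j + 1) := by
      intro l j w hw
      induction hw using Submodule.span_induction with
      | mem w hw =>
        obtain ⟨x, hx, v, rfl⟩ := hw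
        apply Submodule.subset_span
        refine ⟨t l * x, ?_, v, ?_⟩
        · rw [pow_succ']
          exact Ideal.mul_mem_mul (Ideal.subset_span (Set.mem_range_self l)) hx
        · have : ((t l * x * f : A) : Module.End ℂ V) v
              = (T l) (((x * f : A) : Module.End ℂ V) v) := by
            rw [mul_assoc]
            rfl
          rw [this]
      | zero => simpa using (S (j+1)).zero_mem
      | add a b _ _ ha hb => simpa [map_add] using (S (j+1)).add_mem ha hb
      | smul c a _ ha => simpa [map_smul] using (S (j+1)).smul_mem c ha
    have hex : ∃ j, S j = ⊥ := ⟨K, hSK⟩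
    set j0 := Nat.find hex with hj0
    have hj0bot : S j0 = ⊥ := Nat.find_spec hex
    have hj0ne : j0 ≠ 0 := by
      intro h
      exact hS0 (h ▸ hj0bot)
    obtain ⟨j', hj'⟩ : ∃ j', j0 = j' + 1 := ⟨j0 - 1, by omega⟩
    have hSj' : S j' ≠ ⊥ := Nat.find_min hex (by omega)
    obtain ⟨v, hvmem, hvne⟩ := Submodule.exists_mem_ne_zero_of_ne_bot hSj'
    apply hvne
    apply hker
    intro l
    have := hstep l j' v hvmem
    rw [← hj', hj0bot, Submodule.mem_bot] at this
    exact this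
  -- extract coefficients
  have h1 : (1 : A) ∈ Ideal.span (Set.range t) := by rw [← hI, htop]; trivial
  rw [Ideal.mem_span_range_iff_exists_fun] at h1
  obtain ⟨c, hc⟩ := h1
  refine ⟨fun l => (c l : Module.End ℂ V), ?_, ?_⟩
  · intro k l
    have : (c k * t l : A) = t l * c k := mul_comm _ _
    have := congrArg (Subtype.val) this
    simpa using this
  · have := congrArg (Subtype.val) hc
    push_cast at this
    simpa using this

noncomputable def annOp (n : ℕ) (l : Fin n) :
    ExteriorAlgebra ℂ (Fin n → ℂ) →ₗ[ℂ] ExteriorAlgebra ℂ (Fin n → ℂ) :=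
  CliffordAlgebra.contractLeft (Q := (0 : QuadraticForm ℂ (Fin n → ℂ))) (LinearMap.proj l)

lemma creation_ann (n : ℕ) (j l : Fin n) (w : ExteriorAlgebra ℂ (Fin n → ℂ)) :
    creationOp ℂ n j (annOp n l w) + annOp n l (creationOp ℂ n j w)
      = ((Pi.single j (1:ℂ) : Fin n → ℂ) l) • w := by
  have h := CliffordAlgebra.contractLeft_ι_mul (Q := (0 : QuadraticForm ℂ (Fin n → ℂ)))
      (d := LinearMap.proj l) (Pi.single j 1) w
  simp only [LinearMap.proj_apply] at h
  rw [creationOp, annOp]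
  simp only [LinearMap.mulLeft_apply]
  rw [h]
  abel

lemma homotopy {V : Type*} [AddCommGroup V] [Module ℂ V] (n : ℕ)
    (Y : Fin n → Module.End ℂ V) (lam : Fin n → ℂ) (Z : Fin n → Module.End ℂ V)
    (hcomm : ∀ k l, Z k * (Y l - lam l • 1) = (Y l - lam l • 1) * Z k)
    (hsum : ∑ l, Z l * (Y l - lam l • 1) = 1)
    (x : TensorProduct ℂ V (ExteriorAlgebra ℂ (Fin n → ℂ))) :
    koszulOp n Y lam ((∑ l, TensorProduct.map (Z l) (annOp n l)) x)
      + (∑ l, TensorProduct.map (Z l) (annOp n l)) (koszulOp n Y lam x) = x := by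
  classical
  set s : TensorProduct ℂ V (ExteriorAlgebra ℂ (Fin n → ℂ)) →ₗ[ℂ]
      TensorProduct ℂ V (ExteriorAlgebra ℂ (Fin n → ℂ)) :=
    ∑ l, TensorProduct.map (Z l) (annOp n l) with hsdef
  have main : koszulOp n Y lam ∘ₗ s + s ∘ₗ koszulOp n Y lam = LinearMap.id := by
    apply TensorProduct.ext'
    intro v w
    have hs : ∀ (a : V) (b : ExteriorAlgebra ℂ (Fin n → ℂ)),
        s (a ⊗ₜ[ℂ] b) = ∑ l, (Z l a) ⊗ₜ[ℂ] (annOp n l b) := by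
      intro a b
      rw [hsdef]
      simp [LinearMap.sum_apply, TensorProduct.map_tmul]
    have hK : ∀ (a : V) (b : ExteriorAlgebra ℂ (Fin n → ℂ)),
        koszulOp n Y lam (a ⊗ₜ[ℂ] b)
          = ∑ j, ((Y j - lam j • 1) a) ⊗ₜ[ℂ] (creationOp ℂ n j b) := by
      intro a b
      rw [koszulOp]
      simp [LinearMap.sum_apply, TensorProduct.map_tmul]
    simp only [LinearMap.add_apply, LinearMap.comp_apply, LinearMap.id_apply]
    rw [hs, map_sum, hK, map_sum]
    simp only [hK, hs, map_sum]
    rw [Finset.sum_comm]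
    simp_rw [← Finset.sum_add_distrib]
    have hterm : ∀ j l : Fin n,
        ((Y j - lam j • 1) (Z l v)) ⊗ₜ[ℂ] (creationOp ℂ n j (annOp n l w))
          + (Z l ((Y j - lam j • 1) v)) ⊗ₜ[ℂ] (annOp n l (creationOp ℂ n j w))
        = ((Pi.single j (1:ℂ) : Fin n → ℂ) l) • ((Z l ((Y j - lam j • 1) v)) ⊗ₜ[ℂ] w) := by
      intro j l
      have h1 : (Y j - lam j • 1) (Z l v) = Z l ((Y j - lam j • 1) v) := by
        have := LinearMap.congr_fun (hcomm l j) v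
        simpa [Module.End.mul_apply] using this.symm
      rw [h1, ← TensorProduct.tmul_add, creation_ann, TensorProduct.tmul_smul]
    calc ∑ j, ∑ l, (((Y j - lam j • 1) (Z l v)) ⊗ₜ[ℂ] (creationOp ℂ n j (annOp n l w))
            + (Z l ((Y j - lam j • 1) v)) ⊗ₜ[ℂ] (annOp n l (creationOp ℂ n j w)))
        = ∑ j, ∑ l, ((Pi.single j (1:ℂ) : Fin n → ℂ) l) • ((Z l ((Y j - lam j • 1) v)) ⊗ₜ[ℂ] w) := by
          refine Finset.sum_congr rfl fun j _ => Finset.sum_congr rfl fun l _ => hterm j l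
      _ = ∑ j, ((Z j * (Y j - lam j • 1)) v) ⊗ₜ[ℂ] w := by
          refine Finset.sum_congr rfl fun j _ => ?_
          rw [Finset.sum_eq_single j]
          · simp [Module.End.mul_apply]
          · intro b _ hb
            rw [Pi.single_eq_of_ne hb, zero_smul]
          · intro h; exact absurd (Finset.mem_univ j) h
      _ = v ⊗ₜ[ℂ] w := by
          rw [← TensorProduct.sum_tmul, ← LinearMap.sum_apply, hsum, Module.End.one_apply]
  exact LinearMap.congr_fun main x

/-- If `E = E₁ ⊕ E₂` with `E₁` invariant under the commuting operators `X_l`, and `λ` is not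
in the joint spectrum (= set of joint eigenvalues) of the induced operators
`X_{l,2} = p₂ X_l i₂` on `E₂`, then every Koszul cocycle is cohomologous to one in `E₁ ⊗ Λ`. -/
theorem koszul_cocycle_reduction {E : Type*} [AddCommGroup E]
    [Module ℂ E] [FiniteDimensional ℂ E] (n : ℕ)
    (X : Fin n → Module.End ℂ E)
    (hX : ∀ k l, X k * X l = X l * X k)
    (lam : Fin n → ℂ)
    (E₁ E₂ : Submodule ℂ E) (hcompl : IsCompl E₁ E₂)
    (hstab : ∀ l, ∀ x ∈ E₁, X l x ∈ E₁)
    (hspec : ¬ ∃ v : E₂, v ≠ 0 ∧ ∀ l,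
      ((Submodule.linearProjOfIsCompl E₂ E₁ hcompl.symm) ∘ₗ (X l) ∘ₗ E₂.subtype) v
        = lam l • v) :
    ∀ c : TensorProduct ℂ E (ExteriorAlgebra ℂ (Fin n → ℂ)),
      koszulOp n X lam c = 0 →
      ∃ b, c - koszulOp n X lam b ∈
        LinearMap.range (TensorProduct.map E₁.subtype
          (LinearMap.id (R := ℂ) (M := ExteriorAlgebra ℂ (Fin n → ℂ)))) := by
  classical
  intro c hc
  set p₂ : E →ₗ[ℂ] E₂ := Submodule.linearProjOfIsCompl E₂ E₁ hcompl.symm with hp₂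
  set p₁ : E →ₗ[ℂ] E₁ := Submodule.linearProjOfIsCompl E₁ E₂ hcompl with hp₁
  set Y : Fin n → Module.End ℂ E₂ := fun l => p₂ ∘ₗ (X l) ∘ₗ E₂.subtype with hY
  have hp2E1 : ∀ x ∈ E₁, p₂ x = 0 := fun x hx =>
    Submodule.projectionOnto_apply_of_mem_right hcompl.symm hx
  have hid : ∀ x : E, ((p₁ x : E) + (p₂ x : E)) = x := fun x =>
    Submodule.projection_add_projection_eq_self hcompl x
  have hpX : ∀ l (x : E), p₂ (X l x) = Y l (p₂ x) := by
    intro l x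
    have h1 : X l x = X l ((p₁ x : E)) + X l ((p₂ x : E)) := by rw [← map_add, hid]
    rw [h1, map_add, hp2E1 _ (hstab l _ (p₁ x).2), zero_add]
    rfl
  have hYcomm : ∀ k l, Y k * Y l = Y l * Y k := by
    intro k l
    ext v
    have e1 : ∀ k l, (Y k * Y l) v = p₂ (X k (X l (v : E))) := by
      intro k l
      have h1 : (Y k * Y l) v = Y k (Y l v) := rfl
      have h2 : Y l v = p₂ (X l (v : E)) := rfl
      rw [h1, h2, ← hpX k (X l (v : E))]
    rw [e1 k l, e1 l k]
    have := congrArg (fun g : Module.End ℂ E => p₂ (g (v : E))) (hX k l)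
    simpa [Module.End.mul_apply] using this
  have hker : ∀ v : E₂, (∀ l, (Y l - lam l • 1) v = 0) → v = 0 := by
    intro v hv
    by_contra hne
    refine hspec ⟨v, hne, fun l => ?_⟩
    have := hv l
    rw [LinearMap.sub_apply, LinearMap.smul_apply, Module.End.one_apply, sub_eq_zero] at this
    exact this
  have hTcomm : ∀ k l, (Y k - lam k • 1) * (Y l - lam l • 1)
      = (Y l - lam l • 1) * (Y k - lam k • 1) := by
    intro k l
    have h : Commute (Y k) (Y l) := hYcomm k l
    have h1 : Commute (Y k - lam k • 1) (Y l) :=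
      h.sub_left (((Commute.one_left (Y l)).smul_left _))
    have h2 : Commute (Y k - lam k • 1) (Y l - lam l • 1) :=
      h1.sub_right (((Commute.one_right (Y k - lam k • 1)).smul_right _))
    exact h2
  obtain ⟨Z, hZcomm, hZsum⟩ := bezout (fun l => Y l - lam l • 1) hTcomm hker
  set s : TensorProduct ℂ E₂ (ExteriorAlgebra ℂ (Fin n → ℂ)) →ₗ[ℂ]
      TensorProduct ℂ E₂ (ExteriorAlgebra ℂ (Fin n → ℂ)) :=
    ∑ l, TensorProduct.map (Z l) (annOp n l) with hs
  have hh : ∀ x, koszulOp n Y lam (s x) + s (koszulOp n Y lam x) = x :=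
    homotopy n Y lam Z hZcomm hZsum
  set π : TensorProduct ℂ E (ExteriorAlgebra ℂ (Fin n → ℂ)) →ₗ[ℂ]
      TensorProduct ℂ E₂ (ExteriorAlgebra ℂ (Fin n → ℂ)) :=
    TensorProduct.map p₂ LinearMap.id with hπ
  set j₂ : TensorProduct ℂ E₂ (ExteriorAlgebra ℂ (Fin n → ℂ)) →ₗ[ℂ]
      TensorProduct ℂ E (ExteriorAlgebra ℂ (Fin n → ℂ)) :=
    TensorProduct.map E₂.subtype LinearMap.id with hj₂
  have hπK : π ∘ₗ koszulOp n X lam = koszulOp n Y lam ∘ₗ π := by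
    apply TensorProduct.ext'
    intro v w
    rw [hπ]
    simp only [LinearMap.comp_apply, koszulOp, LinearMap.sum_apply, TensorProduct.map_tmul,
      map_sum, LinearMap.id_coe, id_eq]
    refine Finset.sum_congr rfl fun j _ => ?_
    congr 1
    simp only [LinearMap.sub_apply, LinearMap.smul_apply, Module.End.one_apply, map_sub, map_smul]
    rw [hpX]
  have hπj : π ∘ₗ j₂ = LinearMap.id := by
    apply TensorProduct.ext'
    intro v w
    rw [hπ, hj₂]
    simp only [LinearMap.comp_apply, TensorProduct.map_tmul, LinearMap.id_coe, id_eq,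
      Submodule.subtype_apply, LinearMap.id_apply]
    congr 1
    exact Submodule.linearProjOfIsCompl_apply_left hcompl.symm v
  set b : TensorProduct ℂ E (ExteriorAlgebra ℂ (Fin n → ℂ)) := j₂ (s (π c)) with hb
  have hπc0 : π (c - koszulOp n X lam b) = 0 := by
    rw [map_sub]
    have h1 : π (koszulOp n X lam b) = koszulOp n Y lam (π b) := LinearMap.congr_fun hπK b
    have h2 : π b = s (π c) := by rw [hb]; exact LinearMap.congr_fun hπj _
    have h4 : koszulOp n Y lam (π c) = 0 := by
      have h5 := LinearMap.congr_fun hπK c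
      rw [LinearMap.comp_apply, LinearMap.comp_apply, hc, map_zero] at h5
      exact h5.symm
    have h3 := hh (π c)
    rw [h4, map_zero, add_zero] at h3
    rw [h1, h2, h3, sub_self]
  have hdecomp : ∀ x : TensorProduct ℂ E (ExteriorAlgebra ℂ (Fin n → ℂ)),
      TensorProduct.map E₁.subtype (LinearMap.id (R := ℂ)
        (M := ExteriorAlgebra ℂ (Fin n → ℂ))) (TensorProduct.map p₁ LinearMap.id x)
        + j₂ (π x) = x := by
    intro x
    induction x using TensorProduct.induction_on with
    | zero => simp
    | tmul v w =>
      rw [hπ, hj₂]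
      simp only [TensorProduct.map_tmul, LinearMap.id_coe, id_eq, Submodule.subtype_apply]
      rw [← TensorProduct.add_tmul, hid]
    | add a b ha hb =>
      simp only [map_add]
      rw [add_add_add_comm, ha, hb]
  refine ⟨b, ⟨TensorProduct.map p₁ LinearMap.id (c - koszulOp n X lam b), ?_⟩⟩
  have := hdecomp (c - koszulOp n X lam b)
  rw [hπc0, map_zero, add_zero] at this
  exact this
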